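/- The map sending a binary c-tree to its unordered labeled dependency projection is many-to-one as soon as some head has at least two modifiers: if D is a labeled d-tree on {1,…,L} in which some position h has |M_h| ≥ 2, then there exist at least two distinct binary c-trees (with any fixed POS assignment and with proper-node labels in Σ) whose head projection, forgetting the order, equals D. -/

import Mathlib

/-- A node of a constituent tree: either a pre-terminal over position `i`
(standing for the pre-terminal `(p_i, i, {i})` together with its leaf child `i`),
or a proper node `node Z h cs` with label `Z`, lexical head `h` and children `cs`. -/
inductive CNode (L : ℕ) (Sg : Type) : Type where
  | pre  : Fin L → CNode L Sg
  | node : Sg → Fin L → List (CNode L Sg) → CNode L Sg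

namespace CNode

variable {L : ℕ} {Sg : Type}

/-- The lexical head of a node. -/
def head : CNode L Sg → Fin L
  | pre i => i
  | node _ h _ => h

mutual
  /-- The yield of a node. -/
  def yield : CNode L Sg → Finset (Fin L)
    | pre i => {i}
    | node _ _ cs => yieldList cs
  def yieldList : List (CNode L Sg) → Finset (Fin L)
    | [] => ∅
    | c :: cs => yield c ∪ yieldList cs
end

mutual
  /-- The list of all subtrees (nodes) of a tree, including itself. -/
  def subs : CNode L Sg → List (CNode L Sg)
    | pre i => [pre i]
    | node Z h cs => node Z h cs :: subsList cs
  def subsList : List (CNode L Sg) → List (CNode L Sg)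
    | [] => []
    | c :: cs => subs c ++ subsList cs
end

/-- Well-formedness of a c-tree: children have pairwise disjoint yields and
every proper node has exactly one child whose head is the node's head. -/
inductive Valid : CNode L Sg → Prop where
  | pre (i : Fin L) : Valid (pre i)
  | node (Z : Sg) (h : Fin L) (cs : List (CNode L Sg)) :
      (∀ c ∈ cs, Valid c) →
      cs.Pairwise (fun a b => Disjoint a.yield b.yield) →
      (∃! c, c ∈ cs ∧ head c = h) →
      Valid (node Z h cs)

/-- A c-tree on positions `1,…,L`: a well-formed tree whose leaves are exactly
the `L` positions, each appearing exactly once. -/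
def IsCTree (t : CNode L Sg) : Prop := Valid t ∧ t.yield = Finset.univ

/-- Every proper node has exactly two children. -/
def Binary (t : CNode L Sg) : Prop :=
  ∀ s ∈ t.subs, ∀ Z h cs, s = node Z h cs → cs.length = 2

/-- No proper node has exactly one child. -/
def Unaryless (t : CNode L Sg) : Prop :=
  ∀ s ∈ t.subs, ∀ Z h cs, s = node Z h cs → cs.length ≠ 1

/-- Every node's yield is an interval of consecutive positions. -/
def Continuous (t : CNode L Sg) : Prop :=
  ∀ s ∈ t.subs, ∃ a b : Fin L, s.yield = Finset.Icc a b

/-- `AttachesAt C h m Z n`: `n` is a proper node of `C` with label `Z` and lexical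
head `h`, having a (non-head) child whose lexical head is `m ≠ h`;
i.e. the modifier `m` attaches to `h` at the spine node `n`, generating an arc
`(h, m)` labeled `Z`. -/
def AttachesAt (C : CNode L Sg) (h m : Fin L) (Z : Sg) (n : CNode L Sg) : Prop :=
  n ∈ C.subs ∧ ∃ cs, n = node Z h cs ∧ m ≠ h ∧ ∃ c ∈ cs, head c = m

/-- A proper node with head `h` having at least one non-head child
(i.e. a node of `h`'s spine at which some modifier attaches). -/
def attachB (h : Fin L) : CNode L Sg → Bool
  | pre _ => false
  | node _ h' cs => h' = h && cs.any (fun c => head c != h)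

/-- The position, counted from the bottom of the spine of `h`, of the spine node `n`:
the number of proper nodes with head `h` lying weakly below `n` at which modifiers
attach.  This is the order index (`#1, #2, …`) of the attachment event at `n`. -/
def spineIdx (h : Fin L) (n : CNode L Sg) : ℕ :=
  n.subs.countP (attachB h)

end CNode

/-- A labeled (unordered) dependency tree on positions `{1,…,L}` with arc labels in
`Sg`: `par m = some (h, ℓ)` means there is an arc from head `h` to modifier `m`
carrying label `ℓ`; every vertex is reachable from the root. -/
structure LDTree (L : ℕ) (Sg : Type) : Type where
  root : Fin L
  par : Fin L → Option (Fin L × Sg)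
  root_par : par root = none
  reach : ∀ v : Fin L, Relation.ReflTransGen (fun a b => (par b).map Prod.fst = some a) root v

/-- `D` is the (unordered) head projection of the c-tree `C`: `D` has an arc `(h,m)`
labeled `Z` exactly when some proper node of `C` with label `Z` and head `h` has a
non-head child headed `m`. -/
def IsUProjection {L : ℕ} {Sg : Type} (C : CNode L Sg) (D : LDTree L Sg) : Prop :=
  ∀ (h m : Fin L) (ℓ : Sg),
    D.par m = some (h, ℓ) ↔ ∃ n : CNode L Sg, CNode.AttachesAt C h m ℓ n

namespace Stmt10Aux

open CNode Relation
variable {L : ℕ} {Sg : Type}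

def pRel (D : LDTree L Sg) (a b : Fin L) : Prop := (D.par b).map Prod.fst = some a

def up (D : LDTree L Sg) (v : Fin L) : Fin L := ((D.par v).map Prod.fst).getD v

lemma up_eq {D : LDTree L Sg} {a b : Fin L} (h : pRel D a b) : up D b = a := by
  unfold pRel at h; simp [up, h]

lemma exists_iter (D : LDTree L Sg) (v : Fin L) : ∃ n, (up D)^[n] v = D.root := by
  have h := D.reach v
  induction h with
  | refl => exact ⟨0, rfl⟩
  | tail hab hbc ih =>
    obtain ⟨n, hn⟩ := ih
    exact ⟨n + 1, by rw [Function.iterate_succ_apply, up_eq hbc, hn]⟩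

noncomputable def depth (D : LDTree L Sg) (v : Fin L) : ℕ := Nat.find (exists_iter D v)

lemma iter_depth (D : LDTree L Sg) (v : Fin L) : (up D)^[depth D v] v = D.root :=
  Nat.find_spec (exists_iter D v)

lemma depth_pRel {D : LDTree L Sg} {a b : Fin L} (h : pRel D a b) :
    depth D b = depth D a + 1 := by
  have hb0 : depth D b ≠ 0 := by
    intro h0
    have hb : b = D.root := by have := iter_depth D b; rwa [h0] at this
    rw [hb] at h; unfold pRel at h; rw [D.root_par] at h; simp at h
  obtain ⟨k, hk⟩ := Nat.exists_eq_succ_of_ne_zero hb0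
  have hub : up D b = a := up_eq h
  have h1 : depth D a ≤ k := by
    apply Nat.find_min'
    have := iter_depth D b
    rwa [hk, Function.iterate_succ_apply, hub] at this
  have h2 : depth D b ≤ depth D a + 1 := by
    apply Nat.find_min'
    rw [Function.iterate_succ_apply, hub]; exact iter_depth D a
  omega

lemma depth_le {D : LDTree L Sg} {a b : Fin L} (h : ReflTransGen (pRel D) a b) :
    depth D a ≤ depth D b := by
  induction h with
  | refl => exact le_refl _
  | tail _ hbc ih => rw [depth_pRel hbc]; omega

lemma iter_rtg {D : LDTree L Sg} {a b : Fin L} (h : ReflTransGen (pRel D) a b) :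
    (up D)^[depth D b - depth D a] b = a := by
  induction h with
  | refl => simp
  | @tail b c hab hbc ih =>
    have hle := depth_le hab
    rw [depth_pRel hbc, show depth D b + 1 - depth D a = (depth D b - depth D a) + 1 by omega,
      Function.iterate_succ_apply, up_eq hbc]
    exact ih

lemma depth_lt (D : LDTree L Sg) (v : Fin L) : depth D v < L := by
  have key : ∀ k j : ℕ, k < j → j ≤ depth D v → (up D)^[k] v ≠ (up D)^[j] v := by
    intro k j hkj hj heq
    have hroot : (up D)^[depth D v - j + k] v = D.root := by
      have h0 := iter_depth D v
      rw [show depth D v = (depth D v - j) + j by omega, Function.iterate_add_apply,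
        ← heq, ← Function.iterate_add_apply] at h0
      exact h0
    exact Nat.find_min (exists_iter D v) (show depth D v - j + k < depth D v by omega) hroot
  have hinj : Function.Injective (fun k : Fin (depth D v + 1) => (up D)^[(k : ℕ)] v) := by
    intro k j hkj
    by_contra hne
    rcases Nat.lt_or_ge (k : ℕ) (j : ℕ) with hlt | hge
    · exact key k j hlt (by omega) hkj
    · have hlt : (j : ℕ) < (k : ℕ) := by
        rcases Nat.lt_or_ge (j : ℕ) (k : ℕ) with h' | h'
        · exact h'
        · exact absurd (Fin.ext (by omega)) hne
      exact key j k hlt (by omega) hkj.symm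
  have := Fintype.card_le_of_injective _ hinj
  simp at this; omega

lemma pRel_ne {D : LDTree L Sg} {a b : Fin L} (h : pRel D a b) : b ≠ a := by
  intro e; have := depth_pRel h; rw [e] at this; omega


noncomputable def Yd (D : LDTree L Sg) (v : Fin L) : Finset (Fin L) :=
  @Finset.filter _ (fun u => Relation.ReflTransGen (pRel D) v u) (Classical.decPred _) Finset.univ

lemma mem_Yd {D : LDTree L Sg} {v u : Fin L} :
    u ∈ Yd D v ↔ ReflTransGen (pRel D) v u := by
  simp [Yd]

lemma Yd_disjoint {D : LDTree L Sg} {v a b : Fin L} (ha : pRel D v a) (hb : pRel D v b)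
    (hne : a ≠ b) : Disjoint (Yd D a) (Yd D b) := by
  rw [Finset.disjoint_left]
  intro u hua hub
  rw [mem_Yd] at hua hub
  apply hne
  have h1 := iter_rtg hua
  have h2 := iter_rtg hub
  have hd : depth D a = depth D b := by rw [depth_pRel ha, depth_pRel hb]
  rw [← h1, ← h2, hd]

lemma not_mem_Yd_child {D : LDTree L Sg} {v m : Fin L} (h : pRel D v m) : v ∉ Yd D m := by
  rw [mem_Yd]
  intro hr
  have h1 := depth_le hr
  have h2 := depth_pRel h
  omega

noncomputable def YL (D : LDTree L Sg) (l : List (Fin L × Sg)) : Finset (Fin L) :=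
  l.foldr (fun p s => Yd D p.1 ∪ s) ∅

@[simp] lemma YL_nil {D : LDTree L Sg} : YL D [] = ∅ := rfl
@[simp] lemma YL_cons {D : LDTree L Sg} {p l} : YL D (p :: l) = Yd D p.1 ∪ YL D l := rfl

lemma mem_YL {D : LDTree L Sg} {l : List (Fin L × Sg)} {u : Fin L} :
    u ∈ YL D l ↔ ∃ p ∈ l, u ∈ Yd D p.1 := by
  induction l with
  | nil => simp
  | cons p l ih => simp [ih]

def Good (D : LDTree L Sg) (ks : Fin L → List (Fin L × Sg)) : Prop :=
  ∀ v : Fin L, (∀ m ℓ, (m, ℓ) ∈ ks v ↔ D.par m = some (v, ℓ)) ∧ ((ks v).map Prod.fst).Nodup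

lemma Good.pRel_of_mem {D : LDTree L Sg} {ks} (hg : Good D ks) {v : Fin L} {p : Fin L × Sg}
    (hp : p ∈ ks v) : pRel D v p.1 := by
  have := ((hg v).1 p.1 p.2).1 hp
  unfold pRel
  rw [this]
  rfl

def kids (D : LDTree L Sg) (v : Fin L) : List (Fin L × Sg) :=
  (List.finRange L).filterMap
    (fun m => (D.par m).bind (fun q => if q.1 = v then some (m, q.2) else none))

lemma mem_kids {D : LDTree L Sg} {v m : Fin L} {ℓ : Sg} :
    (m, ℓ) ∈ kids D v ↔ D.par m = some (v, ℓ) := by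
  simp only [kids, List.mem_filterMap, List.mem_finRange, true_and]
  constructor
  · rintro ⟨a, ha⟩
    cases e : D.par a with
    | none => rw [e] at ha; simp at ha
    | some q =>
      rw [e] at ha
      simp only [Option.bind_some] at ha
      split_ifs at ha with hq
      · rw [Option.some_inj, Prod.mk.injEq] at ha
        obtain ⟨h1, h2⟩ := ha
        subst h1; subst h2
        rw [e, ← hq]
  · intro hp
    exact ⟨m, by rw [hp]; simp⟩

lemma kids_nodup_fst {D : LDTree L Sg} {v : Fin L} : ((kids D v).map Prod.fst).Nodup := by
  have hfst : ∀ a (b : Fin L × Sg),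
      b ∈ (D.par a).bind (fun q => if q.1 = v then some (a, q.2) else none) → b.1 = a := by
    intro a b hb
    cases e : D.par a with
    | none => rw [e] at hb; simp at hb
    | some q =>
      rw [e] at hb
      simp only [Option.bind_some] at hb
      split_ifs at hb with hq
      · rw [Option.mem_def, Option.some_inj] at hb; rw [← hb]
      · simp at hb
  have h1 : (kids D v).Nodup := by
    apply List.Nodup.filterMap ?_ (List.nodup_finRange L)
    intro a a' b hb hb'
    rw [← hfst a b hb, ← hfst a' b hb']
  apply List.Nodup.map_on ?_ h1
  intro x hx y hy hxy
  have hx' : D.par x.1 = some (v, x.2) := mem_kids.1 hx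
  have hy' : D.par y.1 = some (v, y.2) := mem_kids.1 hy
  rw [hxy, hy'] at hx'
  rw [Option.some_inj, Prod.mk.injEq] at hx'
  exact Prod.ext hxy hx'.2.symm

lemma good_kids (D : LDTree L Sg) : Good D (kids D) :=
  fun _ => ⟨fun _ _ => mem_kids, kids_nodup_fst⟩

def mt (D : LDTree L Sg) (h m0 : Fin L) (ℓ0 : Sg) (v : Fin L) : List (Fin L × Sg) :=
  if v = h then (m0, ℓ0) :: (kids D h).filter (fun q => q.1 != m0) else kids D v

lemma mt_apply_self {D : LDTree L Sg} {h m0 : Fin L} {ℓ0 : Sg} :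
    mt D h m0 ℓ0 h = (m0, ℓ0) :: (kids D h).filter (fun q => q.1 != m0) := by
  simp [mt]

lemma good_mt {D : LDTree L Sg} {h m0 : Fin L} {ℓ0 : Sg}
    (hpar : D.par m0 = some (h, ℓ0)) : Good D (mt D h m0 ℓ0) := by
  intro v
  by_cases hv : v = h
  · subst hv
    rw [mt_apply_self]
    constructor
    · intro m ℓ
      constructor
      · intro hm
        rcases List.mem_cons.1 hm with heq | hmem
        · rw [Prod.mk.injEq] at heq; rw [heq.1, heq.2]; exact hpar
        · exact mem_kids.1 (List.mem_of_mem_filter hmem)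
      · intro hp
        by_cases hm : m = m0
        · subst hm
          rw [hpar] at hp
          rw [Option.some_inj, Prod.mk.injEq] at hp
          rw [hp.2]
          exact List.mem_cons_self
        · refine List.mem_cons_of_mem _ (List.mem_filter.2 ⟨mem_kids.2 hp, ?_⟩)
          simpa using hm
    · rw [List.map_cons]
      refine List.Nodup.cons ?_ ((List.filter_sublist.map Prod.fst).nodup kids_nodup_fst)
      intro hmem
      rw [List.mem_map] at hmem
      obtain ⟨q, hq, hq1⟩ := hmem
      have := List.mem_filter.1 hq
      rw [hq1] at this
      simpa using this.2
  · unfold mt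
    rw [if_neg hv]
    exact ⟨fun _ _ => mem_kids, kids_nodup_fst⟩


def F (v : Fin L) (g : Fin L × Sg → CNode L Sg) : List (Fin L × Sg) → CNode L Sg → CNode L Sg
  | [], acc => acc
  | p :: l, acc => F v g l (.node p.2 v [acc, g p])

@[simp] lemma F_nil {v : Fin L} {g : Fin L × Sg → CNode L Sg} {acc} : F v g [] acc = acc := rfl
@[simp] lemma F_cons {v : Fin L} {g : Fin L × Sg → CNode L Sg} {p l acc} :
    F v g (p :: l) acc = F v g l (.node p.2 v [acc, g p]) := rfl

def buildF (ks : Fin L → List (Fin L × Sg)) : ℕ → Fin L → CNode L Sg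
  | 0, v => .pre v
  | n + 1, v => F v (fun p => buildF ks n p.1) (ks v) (.pre v)

@[simp] lemma buildF_zero {ks : Fin L → List (Fin L × Sg)} {v} : buildF ks 0 v = .pre v := rfl
@[simp] lemma buildF_succ {ks : Fin L → List (Fin L × Sg)} {n v} :
    buildF ks (n + 1) v = F v (fun p => buildF ks n p.1) (ks v) (.pre v) := rfl

lemma F_head {v : Fin L} {g : Fin L × Sg → CNode L Sg} :
    ∀ (l : List (Fin L × Sg)) (acc : CNode L Sg), acc.head = v → (F v g l acc).head = v := by
  intro l
  induction l with
  | nil => intro acc h; exact h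
  | cons p l ih => intro acc _; exact ih _ rfl

lemma head_build {ks : Fin L → List (Fin L × Sg)} : ∀ (n : ℕ) (v : Fin L),
    (buildF ks n v).head = v := by
  intro n v
  cases n with
  | zero => rfl
  | succ n => exact F_head _ _ rfl

lemma yield_node {Z : Sg} {h : Fin L} {a b : CNode L Sg} :
    (CNode.node Z h [a, b]).yield = a.yield ∪ b.yield := by
  show CNode.yieldList [a, b] = _
  rw [CNode.yieldList, CNode.yieldList, CNode.yieldList]
  simp

lemma F_yield {D : LDTree L Sg} {v : Fin L} {g : Fin L × Sg → CNode L Sg} :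
    ∀ (l : List (Fin L × Sg)) (acc : CNode L Sg), (∀ p ∈ l, (g p).yield = Yd D p.1) →
      (F v g l acc).yield = acc.yield ∪ YL D l := by
  intro l
  induction l with
  | nil => intro acc _; simp
  | cons p l ih =>
    intro acc hl
    rw [F_cons, ih _ (fun q hq => hl q (List.mem_cons_of_mem _ hq)), yield_node,
      hl p (List.mem_cons_self), YL_cons, Finset.union_assoc]

lemma subs_node {Z : Sg} {h : Fin L} {a b : CNode L Sg} :
    (CNode.node Z h [a, b]).subs = CNode.node Z h [a, b] :: (a.subs ++ b.subs) := by
  rw [CNode.subs, CNode.subsList, CNode.subsList, CNode.subsList]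
  simp

lemma F_subs {v : Fin L} {g : Fin L × Sg → CNode L Sg} :
    ∀ (l : List (Fin L × Sg)) (acc : CNode L Sg) (s : CNode L Sg),
      s ∈ (F v g l acc).subs ↔ s ∈ acc.subs ∨
        ∃ l₁ p l₂, l = l₁ ++ p :: l₂ ∧
          (s = CNode.node p.2 v [F v g l₁ acc, g p] ∨ s ∈ (g p).subs) := by
  intro l
  induction l with
  | nil =>
    intro acc s
    simp only [F_nil]
    constructor
    · exact Or.inl
    · rintro (h | ⟨l₁, p, l₂, hl, _⟩)
      · exact h
      · exact absurd hl (List.append_ne_nil_of_right_ne_nil _ (List.cons_ne_nil _ _)).symm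
  | cons p l ih =>
    intro acc s
    rw [F_cons, ih]
    constructor
    · rintro (h | ⟨l₁, q, l₂, hl, h⟩)
      · rw [subs_node] at h
        rcases List.mem_cons.1 h with rfl | h
        · exact Or.inr ⟨[], p, l, rfl, Or.inl rfl⟩
        · rcases List.mem_append.1 h with h | h
          · exact Or.inl h
          · exact Or.inr ⟨[], p, l, rfl, Or.inr h⟩
      · exact Or.inr ⟨p :: l₁, q, l₂, by rw [hl, List.cons_append], h⟩
    · rintro (h | ⟨l₁, q, l₂, hl, h⟩)
      · left; rw [subs_node]
        exact List.mem_cons_of_mem _ (List.mem_append_left _ h)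
      · cases l₁ with
        | nil =>
          rw [List.nil_append, List.cons.injEq] at hl
          obtain ⟨rfl, rfl⟩ := hl
          left
          rw [subs_node]
          rcases h with rfl | h
          · exact List.mem_cons_self
          · exact List.mem_cons_of_mem _ (List.mem_append_right _ h)
        | cons q' l₁' =>
          rw [List.cons_append, List.cons.injEq] at hl
          obtain ⟨rfl, rfl⟩ := hl
          exact Or.inr ⟨l₁', q, l₂, rfl, h⟩


def Inv (D : LDTree L Sg) (n : ℕ) (v : Fin L) : Prop := L ≤ n + depth D v + 1

lemma Inv.child {D : LDTree L Sg} {n : ℕ} {v m : Fin L} (h : Inv D (n + 1) v)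
    (hc : pRel D v m) : Inv D n m := by
  unfold Inv at *
  rw [depth_pRel hc]
  omega

lemma Inv.top (D : LDTree L Sg) (n : ℕ) (hn : L ≤ n) (v : Fin L) : Inv D n v := by
  unfold Inv; omega

lemma ks_nil_of_inv0 {D : LDTree L Sg} {ks} (hg : Good D ks) {v : Fin L} (h : Inv D 0 v) :
    ks v = [] := by
  cases e : ks v with
  | nil => rfl
  | cons p l =>
    exfalso
    have hc : pRel D v p.1 := hg.pRel_of_mem (by rw [e]; exact List.mem_cons_self)
    have h1 := depth_pRel hc
    have h2 := depth_lt D p.1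
    unfold Inv at h
    omega

lemma pRel_iff_mem_ks {D : LDTree L Sg} {ks} (hg : Good D ks) {v c : Fin L} :
    pRel D v c ↔ ∃ ℓ, (c, ℓ) ∈ ks v := by
  constructor
  · intro h
    unfold pRel at h
    cases e : D.par c with
    | none => rw [e] at h; simp at h
    | some q =>
      rw [e] at h
      simp only [Option.map_some, Option.some_inj] at h
      exact ⟨q.2, ((hg v).1 c q.2).2 (by rw [e, ← h])⟩
  · rintro ⟨ℓ, hm⟩
    exact hg.pRel_of_mem hm

lemma yield_build {D : LDTree L Sg} {ks} (hg : Good D ks) :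
    ∀ (n : ℕ) (v : Fin L), Inv D n v → (buildF ks n v).yield = Yd D v := by
  intro n
  induction n with
  | zero =>
    intro v hInv
    rw [buildF_zero]
    show ({v} : Finset (Fin L)) = Yd D v
    ext u
    simp only [Finset.mem_singleton, mem_Yd]
    constructor
    · rintro rfl; exact ReflTransGen.refl
    · intro h
      rcases Relation.ReflTransGen.cases_head h with rfl | ⟨c, hc, _⟩
      · rfl
      · exfalso
        obtain ⟨ℓ, hm⟩ := (pRel_iff_mem_ks hg).1 hc
        rw [ks_nil_of_inv0 hg hInv] at hm
        simp at hm
  | succ n ih =>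
    intro v hInv
    rw [buildF_succ, F_yield (D := D) _ _
      (fun p hp => ih p.1 (hInv.child (hg.pRel_of_mem hp)))]
    show ({v} : Finset (Fin L)) ∪ _ = _
    ext u
    simp only [Finset.mem_union, Finset.mem_singleton, mem_YL, mem_Yd]
    constructor
    · rintro (rfl | ⟨p, hp, hu⟩)
      · exact ReflTransGen.refl
      · exact ReflTransGen.head (hg.pRel_of_mem hp) hu
    · intro h
      rcases Relation.ReflTransGen.cases_head h with rfl | ⟨c, hc, hcu⟩
      · exact Or.inl rfl
      · obtain ⟨ℓ, hm⟩ := (pRel_iff_mem_ks hg).1 hc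
        exact Or.inr ⟨(c, ℓ), hm, hcu⟩

lemma F_valid {D : LDTree L Sg} {v : Fin L} {g : Fin L × Sg → CNode L Sg} :
    ∀ (l : List (Fin L × Sg)) (acc : CNode L Sg),
      acc.Valid → acc.head = v →
      (∀ p ∈ l, (g p).Valid ∧ (g p).yield = Yd D p.1 ∧ (g p).head = p.1 ∧ p.1 ≠ v) →
      (∀ p ∈ l, Disjoint acc.yield (Yd D p.1)) →
      l.Pairwise (fun p q => Disjoint (Yd D p.1) (Yd D q.1)) →
      (F v g l acc).Valid := by
  intro l
  induction l with
  | nil => intro acc hv _ _ _ _; exact hv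
  | cons p l ih =>
    intro acc hv hh hgl hd hp
    obtain ⟨hgv, hgy, hgh, hgne⟩ := hgl p (List.mem_cons_self)
    have hacc' : (CNode.node p.2 v [acc, g p]).Valid := by
      refine CNode.Valid.node _ _ _ ?_ ?_ ?_
      · intro c hc
        rcases List.mem_cons.1 hc with rfl | hc
        · exact hv
        · rcases List.mem_cons.1 hc with rfl | hc
          · exact hgv
          · simp at hc
      · refine List.Pairwise.cons ?_ (List.pairwise_singleton _ _)
        intro b hb
        rw [List.mem_singleton] at hb
        subst hb
        rw [hgy]
        exact hd p (List.mem_cons_self)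
      · refine ⟨acc, ⟨List.mem_cons_self, hh⟩, ?_⟩
        rintro c ⟨hc, hch⟩
        rcases List.mem_cons.1 hc with rfl | hc
        · rfl
        · rcases List.mem_cons.1 hc with rfl | hc
          · exact absurd (hgh ▸ hch) hgne
          · simp at hc
    rw [F_cons]
    apply ih _ hacc' rfl
    · intro q hq; exact hgl q (List.mem_cons_of_mem _ hq)
    · intro q hq
      rw [yield_node, hgy, Finset.disjoint_union_left]
      exact ⟨hd q (List.mem_cons_of_mem _ hq), (List.pairwise_cons.1 hp).1 q hq⟩
    · exact (List.pairwise_cons.1 hp).2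

lemma valid_build {D : LDTree L Sg} {ks} (hg : Good D ks) :
    ∀ (n : ℕ) (v : Fin L), Inv D n v → (buildF ks n v).Valid := by
  intro n
  induction n with
  | zero => intro v _; exact CNode.Valid.pre v
  | succ n ih =>
    intro v hInv
    rw [buildF_succ]
    apply F_valid (D := D) _ _ (CNode.Valid.pre v) rfl
    · intro p hp
      have hc := hg.pRel_of_mem hp
      have hInv' := hInv.child hc
      exact ⟨ih _ hInv', yield_build hg n _ hInv', head_build _ _, pRel_ne hc⟩
    · intro p hp
      show Disjoint ({v} : Finset (Fin L)) _
      rw [Finset.disjoint_singleton_left]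
      exact not_mem_Yd_child (hg.pRel_of_mem hp)
    · have hnd : (ks v).Pairwise (fun p q => p.1 ≠ q.1) := List.pairwise_map.1 (hg v).2
      refine hnd.imp_of_mem ?_
      intro p q hpm hqm hne
      exact Yd_disjoint (hg.pRel_of_mem hpm) (hg.pRel_of_mem hqm) hne

lemma binary_build {D : LDTree L Sg} {ks} (hg : Good D ks) :
    ∀ (n : ℕ) (v : Fin L), Inv D n v → ∀ s ∈ (buildF ks n v).subs,
      ∀ (Z : Sg) (hh : Fin L) (cs : List (CNode L Sg)), s = CNode.node Z hh cs →
        cs.length = 2 := by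
  intro n
  induction n with
  | zero =>
    intro v _ s hs Z hh cs he
    rw [buildF_zero, CNode.subs, List.mem_singleton] at hs
    rw [hs] at he
    exact nomatch he
  | succ n ih =>
    intro v hInv s hs Z hh cs he
    rw [buildF_succ, F_subs] at hs
    rcases hs with hs | ⟨l₁, p, l₂, hsplit, hs | hs⟩
    · rw [CNode.subs, List.mem_singleton] at hs
      rw [hs] at he
      exact nomatch he
    · rw [hs] at he
      injection he with _ _ hcs
      rw [← hcs]
      rfl
    · have hmem : p ∈ ks v := by
        rw [hsplit]; exact List.mem_append_right _ (List.mem_cons_self)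
      exact ih p.1 (hInv.child (hg.pRel_of_mem hmem)) s hs Z hh cs he


lemma yield_insert {D : LDTree L Sg} {ks : Fin L → List (Fin L × Sg)} (hg : Good D ks)
    {n : ℕ} {v : Fin L} (hInv : Inv D (n + 1) v) {l₁ l₂ : List (Fin L × Sg)}
    {p : Fin L × Sg} (hsplit : ks v = l₁ ++ p :: l₂) :
    (CNode.node p.2 v [F v (fun q => buildF ks n q.1) l₁ (CNode.pre v),
        buildF ks n p.1]).yield = insert v (YL D l₁ ∪ Yd D p.1) := by
  have hmem : p ∈ ks v := by
    rw [hsplit]; exact List.mem_append_right _ (List.mem_cons_self)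
  have hl₁ : ∀ q ∈ l₁, q ∈ ks v := by
    intro q hq; rw [hsplit]; exact List.mem_append_left _ hq
  rw [yield_node, F_yield (D := D) _ _
      (fun q hq => yield_build hg n _ (hInv.child (hg.pRel_of_mem (hl₁ q hq)))),
    yield_build hg n _ (hInv.child (hg.pRel_of_mem hmem))]
  show ({v} : Finset (Fin L)) ∪ _ ∪ _ = _
  ext u
  simp only [Finset.mem_union, Finset.mem_singleton, Finset.mem_insert]
  tauto

lemma subs_spec {D : LDTree L Sg} {ks} (hg : Good D ks) :
    ∀ (n : ℕ) (v : Fin L), Inv D n v → ∀ s ∈ (buildF ks n v).subs,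
      (∃ u, s = CNode.pre u) ∨
      ∃ (w : Fin L) (p : Fin L × Sg) (l₁ l₂ : List (Fin L × Sg)) (acc c : CNode L Sg),
        ks w = l₁ ++ p :: l₂ ∧ s = CNode.node p.2 w [acc, c] ∧ acc.head = w ∧
        c.head = p.1 ∧ s.yield = insert w (YL D l₁ ∪ Yd D p.1) := by
  intro n
  induction n with
  | zero =>
    intro v _ s hs
    rw [buildF_zero, CNode.subs, List.mem_singleton] at hs
    exact Or.inl ⟨v, hs⟩
  | succ n ih =>
    intro v hInv s hs
    rw [buildF_succ, F_subs] at hs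
    rcases hs with hs | ⟨l₁, p, l₂, hsplit, hs | hs⟩
    · rw [CNode.subs, List.mem_singleton] at hs
      exact Or.inl ⟨v, hs⟩
    · right
      refine ⟨v, p, l₁, l₂, _, _, hsplit, hs, F_head _ _ rfl, head_build _ _, ?_⟩
      rw [hs]
      exact yield_insert hg hInv hsplit
    · have hmem : p ∈ ks v := by
        rw [hsplit]; exact List.mem_append_right _ (List.mem_cons_self)
      exact ih p.1 (hInv.child (hg.pRel_of_mem hmem)) s hs

lemma spine_mem {D : LDTree L Sg} {ks} (hg : Good D ks) :
    ∀ (n : ℕ) (v : Fin L), Inv D n v → ∀ u : Fin L, ReflTransGen (pRel D) v u →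
      ∀ (l₁ : List (Fin L × Sg)) (p : Fin L × Sg) (l₂ : List (Fin L × Sg)),
        ks u = l₁ ++ p :: l₂ →
        ∃ acc c : CNode L Sg, (CNode.node p.2 u [acc, c]) ∈ (buildF ks n v).subs ∧
          c.head = p.1 ∧
          (CNode.node p.2 u [acc, c]).yield = insert u (YL D l₁ ∪ Yd D p.1) := by
  intro n
  induction n with
  | zero =>
    intro v hInv u hu l₁ p l₂ hsp
    exfalso
    rcases Relation.ReflTransGen.cases_head hu with rfl | ⟨c0, hc0, _⟩
    · rw [ks_nil_of_inv0 hg hInv] at hsp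
      exact absurd hsp.symm (List.append_ne_nil_of_right_ne_nil _ (List.cons_ne_nil _ _))
    · obtain ⟨ℓ, hm⟩ := (pRel_iff_mem_ks hg).1 hc0
      rw [ks_nil_of_inv0 hg hInv] at hm
      simp at hm
  | succ n ih =>
    intro v hInv u hu l₁ p l₂ hsp
    rcases Relation.ReflTransGen.cases_head hu with rfl | ⟨c0, hc0, hc0u⟩
    · refine ⟨F v (fun q => buildF ks n q.1) l₁ (CNode.pre v), buildF ks n p.1, ?_,
        head_build _ _, yield_insert hg hInv hsp⟩
      rw [buildF_succ, F_subs]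
      exact Or.inr ⟨l₁, p, l₂, hsp, Or.inl rfl⟩
    · obtain ⟨ℓ0, hm0⟩ := (pRel_iff_mem_ks hg).1 hc0
      obtain ⟨acc, c, hmem, hch, hy⟩ := ih c0 (hInv.child hc0) u hc0u l₁ p l₂ hsp
      refine ⟨acc, c, ?_, hch, hy⟩
      rw [buildF_succ, F_subs]
      obtain ⟨t1, t2, hsplit⟩ := List.append_of_mem hm0
      exact Or.inr ⟨t1, (c0, ℓ0), t2, hsplit, Or.inr hmem⟩

lemma isCTree_build {D : LDTree L Sg} {ks} (hg : Good D ks) :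
    CNode.IsCTree (buildF ks L D.root) := by
  refine ⟨valid_build hg L _ (Inv.top D L le_rfl _), ?_⟩
  rw [yield_build hg L _ (Inv.top D L le_rfl _)]
  apply Finset.eq_univ_iff_forall.2
  intro u
  exact mem_Yd.2 (D.reach u)

lemma binary_build' {D : LDTree L Sg} {ks} (hg : Good D ks) :
    CNode.Binary (buildF ks L D.root) :=
  fun s hs => binary_build hg L _ (Inv.top D L le_rfl _) s hs

lemma proj_build {D : LDTree L Sg} {ks} (hg : Good D ks) :
    IsUProjection (buildF ks L D.root) D := by
  intro hh m ℓ
  constructor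
  · intro hpar
    have hmem : (m, ℓ) ∈ ks hh := ((hg hh).1 m ℓ).2 hpar
    obtain ⟨t1, t2, hsp⟩ := List.append_of_mem hmem
    obtain ⟨acc, c, hmem', hch, _⟩ := spine_mem hg L D.root (Inv.top D L le_rfl _) hh
      (D.reach hh) t1 (m, ℓ) t2 hsp
    have hr : pRel D hh m := by unfold pRel; rw [hpar]; rfl
    exact ⟨_, hmem', [acc, c], rfl, pRel_ne hr, c, by simp, hch⟩
  · rintro ⟨nn, hsub, cs, hnne, hmne, c, hcmem, hch⟩
    rcases subs_spec hg L D.root (Inv.top D L le_rfl _) nn hsub with ⟨u, hu⟩ |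
      ⟨w, p, l₁, l₂, acc, c', hkw, heq, hacch, hc'h, _⟩
    · rw [hnne] at hu
      exact nomatch hu
    · rw [hnne] at heq
      injection heq with hZ hw hcs
      rw [hcs] at hcmem
      rcases List.mem_cons.1 hcmem with rfl | hcmem
      · exact absurd (by rw [← hch, hacch, ← hw]) hmne
      · rcases List.mem_cons.1 hcmem with rfl | hcmem
        · have hp1 : p.1 = m := by rw [← hc'h, hch]
          have hpmem : p ∈ ks hh := by
            rw [hw, hkw]
            exact List.mem_append_right _ (List.mem_cons_self)
          have := ((hg hh).1 p.1 p.2).1 hpmem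
          rw [hp1, ← hZ] at this
          rw [this, hw]
        · simp at hcmem

end Stmt10Aux

/-- The map sending a binary c-tree to its unordered labeled
dependency projection is many-to-one as soon as some head has at least two
modifiers: if `D` is a labeled d-tree on `{1,…,L}` in which some position `h` has
at least two modifiers, then there exist at least two distinct binary c-trees
(with the fixed POS assignment `pos` and proper-node labels in `Sg`) whose head
projection, forgetting the order, equals `D`. -/
theorem stmt10 (L : ℕ) (Sg P : Type) [Fintype Sg] (pos : Fin L → P)
    (D : LDTree L Sg) (h : Fin L) (m₁ m₂ : Fin L) (hne : m₁ ≠ m₂)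
    (h1 : (D.par m₁).map Prod.fst = some h) (h2 : (D.par m₂).map Prod.fst = some h) :
    ∃ C₁ C₂ : CNode L Sg, C₁ ≠ C₂ ∧
      (CNode.IsCTree C₁ ∧ CNode.Binary C₁ ∧ IsUProjection C₁ D) ∧
      (CNode.IsCTree C₂ ∧ CNode.Binary C₂ ∧ IsUProjection C₂ D) := by
  classical
  open Stmt10Aux in
  · obtain ⟨ℓ₁, hp1⟩ : ∃ ℓ, D.par m₁ = some (h, ℓ) := by
      cases e : D.par m₁ with
      | none => rw [e] at h1; simp at h1
      | some q =>
        rw [e] at h1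
        simp only [Option.map_some, Option.some_inj] at h1
        exact ⟨q.2, by rw [← h1]⟩
    obtain ⟨ℓ₂, hp2⟩ : ∃ ℓ, D.par m₂ = some (h, ℓ) := by
      cases e : D.par m₂ with
      | none => rw [e] at h2; simp at h2
      | some q =>
        rw [e] at h2
        simp only [Option.map_some, Option.some_inj] at h2
        exact ⟨q.2, by rw [← h2]⟩
    have hg₁ : Good D (mt D h m₁ ℓ₁) := good_mt hp1
    have hg₂ : Good D (mt D h m₂ ℓ₂) := good_mt hp2
    have hr1 : pRel D h m₁ := by unfold pRel; rw [hp1]; rfl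
    have hr2 : pRel D h m₂ := by unfold pRel; rw [hp2]; rfl
    refine ⟨buildF (mt D h m₁ ℓ₁) L D.root, buildF (mt D h m₂ ℓ₂) L D.root, ?_,
      ⟨isCTree_build hg₁, binary_build' hg₁, proj_build hg₁⟩,
      ⟨isCTree_build hg₂, binary_build' hg₂, proj_build hg₂⟩⟩
    intro heq
    have hsp1 : mt D h m₁ ℓ₁ h = [] ++ (m₁, ℓ₁) :: (kids D h).filter (fun q => q.1 != m₁) := by
      rw [List.nil_append]; exact mt_apply_self
    obtain ⟨acc, c, hmem, hch, hy⟩ := spine_mem hg₁ L D.root (Inv.top D L le_rfl _) h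
      (D.reach h) [] (m₁, ℓ₁) _ hsp1
    rw [heq] at hmem
    rcases subs_spec hg₂ L D.root (Inv.top D L le_rfl _) _ hmem with ⟨u, hu⟩ |
      ⟨w, p, l₁, l₂, acc', c', hkw, hseq, _, _, hy'⟩
    · exact nomatch hu
    · have hE : insert h (Yd D m₁) = insert w (YL D l₁ ∪ Yd D p.1) := by
        have h0 := hy.symm.trans hy'
        rwa [YL_nil, Finset.empty_union] at h0
      have hm2ni : m₂ ∉ insert h (Yd D m₁) := by
        rw [Finset.mem_insert, mem_Yd]
        push_neg
        refine ⟨pRel_ne hr2, ?_⟩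
        intro hr
        rcases Relation.ReflTransGen.cases_tail hr with he | ⟨cc, hmc, hcm⟩
        · exact hne he.symm
        · have hcch : cc = h := by
            unfold pRel at hcm
            rw [h2] at hcm
            exact (Option.some_inj.1 hcm).symm
          rw [hcch] at hmc
          have hd1 := depth_le hmc
          have hd2 := depth_pRel hr1
          omega
      by_cases hw : w = h
      · subst hw
        apply hm2ni
        rw [hE]
        have hk2 : mt D w m₂ ℓ₂ w = (m₂, ℓ₂) :: (kids D w).filter (fun q => q.1 != m₂) :=
          mt_apply_self
        rw [hk2] at hkw
        cases l₁ with
        | nil =>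
          rw [List.nil_append, List.cons.injEq] at hkw
          refine Finset.mem_insert_of_mem (Finset.mem_union_right _ ?_)
          rw [← hkw.1]
          exact mem_Yd.2 Relation.ReflTransGen.refl
        | cons q l₁' =>
          rw [List.cons_append, List.cons.injEq] at hkw
          refine Finset.mem_insert_of_mem (Finset.mem_union_left _ ?_)
          rw [YL_cons, ← hkw.1]
          exact Finset.mem_union_left _ (mem_Yd.2 Relation.ReflTransGen.refl)
      · have hwmem : w ∈ insert h (Yd D m₁) := by
          rw [hE]; exact Finset.mem_insert_self _ _
        have hwm₁ : Relation.ReflTransGen (pRel D) m₁ w := by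
          rcases Finset.mem_insert.1 hwmem with he | hm
          · exact absurd he hw
          · exact mem_Yd.1 hm
        have hhmem : h ∈ insert w (YL D l₁ ∪ Yd D p.1) := by
          rw [← hE]; exact Finset.mem_insert_self _ _
        rcases Finset.mem_insert.1 hhmem with he | hm
        · exact hw he.symm
        · obtain ⟨q, hqmem, hqY⟩ : ∃ q, q ∈ mt D h m₂ ℓ₂ w ∧ h ∈ Yd D q.1 := by
            rcases Finset.mem_union.1 hm with hm | hm
            · obtain ⟨q, hq, hqY⟩ := mem_YL.1 hm
              exact ⟨q, by rw [hkw]; exact List.mem_append_left _ hq, hqY⟩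
            · exact ⟨p, by rw [hkw]; exact List.mem_append_right _ (List.mem_cons_self), hm⟩
          have hq' : pRel D w q.1 := hg₂.pRel_of_mem hqmem
          have hchain : Relation.ReflTransGen (pRel D) m₁ h :=
            Relation.ReflTransGen.trans (hwm₁.tail hq') (mem_Yd.1 hqY)
          have hd1 := depth_le hchain
          have hd2 := depth_pRel hr1
          omega
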